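/- Let k > 0 and δ ∈ (0,1]. Suppose w : [0,1] → ℝ is twice continuously differentiable and ζ : [0,1] → ℝ is continuous, with w(0) = w(1) = 0, ζ(0) = ζ(1) = 0, and w''(z) − k² w(z) = k ζ(z) for all z ∈ [0,1], and suppose T : [0,1] → ℝ is continuously differentiable with T(0) = 0. Then ∫₀^δ |w(z) T(z)| dz ≤ (2c₁/5) k^{1/2} δ^{5/2} (∫₀¹ ζ² dz)^{1/2} (∫₀¹ T'² dz)^{1/2}, where c₁ := 3^{3/4}/2^{3/2}. -/

import Mathlib

open MeasureTheory Real intervalIntegral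

set_option maxHeartbeats 1000000

lemma s3_facts : Real.sqrt 3 ^ 2 = 3 ∧ (1.73:ℝ) ≤ Real.sqrt 3 ∧ Real.sqrt 3 ≤ 1.74 := by
  have h1 : Real.sqrt 3 ^ 2 = 3 := Real.sq_sqrt (by norm_num)
  have h2 : 0 ≤ Real.sqrt 3 := Real.sqrt_nonneg 3
  refine ⟨h1, ?_, ?_⟩ <;> nlinarith

lemma exp_upper {x : ℝ} (hx : 0 ≤ x) (hx1 : x ≤ 1) :
    Real.exp x ≤ 1 + x + x^2/2 + 7*x^3/18 := by
  have h := Real.exp_bound' hx hx1 (n := 3) (by norm_num)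
  have hs : (∑ m ∈ Finset.range 3, x ^ m / m.factorial) = 1 + x + x^2/2 := by
    norm_num [Finset.sum_range_succ]
  rw [hs] at h
  norm_num [Nat.factorial] at h
  nlinarith [pow_nonneg hx 3]

lemma exp_lower {x : ℝ} (hx : 0 ≤ x) : 1 + x + x^2/2 + x^3/6 ≤ Real.exp x := by
  have h := Real.sum_le_exp_of_nonneg hx 4
  have hs : (∑ m ∈ Finset.range 4, x ^ m / m.factorial) = 1 + x + x^2/2 + x^3/6 := by
    norm_num [Finset.sum_range_succ, Nat.factorial]
  linarith [hs ▸ h]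

lemma Gpos {x : ℝ} (hx : 0 ≤ x) :
    Real.exp x ≤ 3*Real.sqrt 3/16 * (x^2 * Real.cosh x + 4*x*Real.sinh x + 2*Real.cosh x + 2) := by
  obtain ⟨hs, hs1, hs2⟩ := s3_facts
  set s := Real.sqrt 3 with hsdef
  set u := Real.exp x with hu
  have hupos : 0 < u := Real.exp_pos x
  have hL : 1 + x + x^2/2 + x^3/6 ≤ u := exp_lower hx
  have h4K : 0 ≤ 4*(3*s/16) := by linarith
  have hKu : 0 ≤ 4*(3*s/16) * (u - (1+x+x^2/2+x^3/6)) := mul_nonneg h4K (by linarith)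
  have key : 0 ≤ (3*s/16*(x^2+4*x+2) - 2)*u^2 + 4*(3*s/16)*u + (3*s/16)*(x^2-4*x+2) := by
    rcases le_or_gt (3*s/16*(x^2+4*x+2)) 2 with hc | hc
    · have hx1 : x ≤ 1 := by nlinarith
      have hU : u ≤ 1 + x + x^2/2 + 7*x^3/18 := exp_upper hx hx1
      have hP1 : 0 ≤ (3*s/16*(x^2+4*x+2) - 2)*(1+x+x^2/2+7*x^3/18)^2
          + 4*(3*s/16)*(1+x+x^2/2+x^3/6) + (3*s/16)*(x^2-4*x+2) := by
        have hA : 0 ≤ (x^2+4*x+2)*(1+x+x^2/2+7*x^3/18)^2 + 4*(1+x+x^2/2+x^3/6) + (x^2-4*x+2) := by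
          nlinarith [sq_nonneg (x-1), sq_nonneg x, sq_nonneg (1+x+x^2/2+7*x^3/18), mul_nonneg hx hx, sq_nonneg (x-2)]
        have hss : 0 ≤ (s - 1.73) * ((x^2+4*x+2)*(1+x+x^2/2+7*x^3/18)^2 + 4*(1+x+x^2/2+x^3/6) + (x^2-4*x+2)) :=
          mul_nonneg (by linarith) hA
        nlinarith [hss, sq_nonneg (x-3/10), sq_nonneg (x-1/2), sq_nonneg x, mul_nonneg (mul_nonneg hx hx) hx, sq_nonneg (x^2-x), sq_nonneg (x^3-x), sq_nonneg (x^4-x)]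
      have hsq : u^2 ≤ (1+x+x^2/2+7*x^3/18)^2 := by nlinarith
      have hc' : 0 ≤ (2 - 3*s/16*(x^2+4*x+2)) * ((1+x+x^2/2+7*x^3/18)^2 - u^2) :=
        mul_nonneg (by linarith) (by linarith)
      nlinarith [hc', hP1, hKu]
    · have hP2 : 0 ≤ (3*s/16*(x^2+4*x+2) - 2)*(1+x+x^2/2+x^3/6)^2
          + 4*(3*s/16)*(1+x+x^2/2+x^3/6) + (3*s/16)*(x^2-4*x+2) := by
        have hA : 0 ≤ (x^2+4*x+2)*(1+x+x^2/2+x^3/6)^2 + 4*(1+x+x^2/2+x^3/6) + (x^2-4*x+2) := by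
          nlinarith [sq_nonneg (x-1), sq_nonneg x, sq_nonneg (1+x+x^2/2+x^3/6), mul_nonneg hx hx, sq_nonneg (x-2)]
        have hss : 0 ≤ (s - 1.73) * ((x^2+4*x+2)*(1+x+x^2/2+x^3/6)^2 + 4*(1+x+x^2/2+x^3/6) + (x^2-4*x+2)) :=
          mul_nonneg (by linarith) hA
        nlinarith [hss, sq_nonneg (x-3/10), sq_nonneg (x-1/2), sq_nonneg x, mul_nonneg (mul_nonneg hx hx) hx, sq_nonneg (x^2-x), sq_nonneg (x^3-x), sq_nonneg (x^4-x), mul_nonneg (mul_nonneg (mul_nonneg hx hx) hx) hx]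
      have hLpos : (0:ℝ) < 1 + x + x^2/2 + x^3/6 := by positivity
      have hsq : (1+x+x^2/2+x^3/6)^2 ≤ u^2 := by nlinarith
      have hc' : 0 ≤ (3*s/16*(x^2+4*x+2) - 2) * (u^2 - (1+x+x^2/2+x^3/6)^2) :=
        mul_nonneg (by linarith) (by linarith)
      nlinarith [hc', hP2, hKu]
  have hv : Real.cosh x = (u + 1/u)/2 := by
    rw [Real.cosh_eq, Real.exp_neg, ← hu, one_div]
  have hw : Real.sinh x = (u - 1/u)/2 := by
    rw [Real.sinh_eq, Real.exp_neg, ← hu, one_div]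
  have expand : (3*s/16 * (x^2 * Real.cosh x + 4*x*Real.sinh x + 2*Real.cosh x + 2) - u) * (2*u)
      = (3*s/16*(x^2+4*x+2) - 2)*u^2 + 4*(3*s/16)*u + (3*s/16)*(x^2-4*x+2) := by
    rw [hv, hw]; field_simp; ring
  have h2u : (0:ℝ) < 2*u := by positivity
  have hfin := (mul_nonneg_iff_of_pos_right h2u).mp (expand ▸ key)
  linarith

lemma star {x : ℝ} (hx : 0 ≤ x) :
    Real.exp x - 1 - x ≤ 3*Real.sqrt 3/16 * x^2 * (Real.cosh x + 1) := by
  set s := Real.sqrt 3 with hsdef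
  set F : ℝ → ℝ := fun t => 3*s/16 * t^2 * (Real.cosh t + 1) - Real.exp t + 1 + t with hF
  set F' : ℝ → ℝ := fun t => 3*s/16 * (2*t*(Real.cosh t + 1) + t^2 * Real.sinh t) - Real.exp t + 1 with hF'
  have hder1 : ∀ y : ℝ, HasDerivAt F (F' y) y := by
    intro y
    have h1 : HasDerivAt (fun t : ℝ => t^2) (2*y) y := by simpa using hasDerivAt_pow 2 y
    have h2 : HasDerivAt (fun t : ℝ => Real.cosh t + 1) (Real.sinh y) y :=
      (Real.hasDerivAt_cosh y).add_const 1
    have h3 : HasDerivAt (fun t : ℝ => t^2 * (Real.cosh t + 1))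
        (2*y*(Real.cosh y + 1) + y^2 * Real.sinh y) y := h1.mul h2
    have h4 := (h3.const_mul (3*s/16)).sub (Real.hasDerivAt_exp y)
    have h5 := (h4.add_const 1).add (hasDerivAt_id y)
    convert h5 using 1
    · rfl
    · rfl
    funext t; simp only [hF, id_eq, Pi.add_apply, Pi.sub_apply]; ring
  have hder2 : ∀ y : ℝ, HasDerivAt F'
      (3*s/16 * (y^2 * Real.cosh y + 4*y*Real.sinh y + 2*Real.cosh y + 2) - Real.exp y) y := by
    intro y
    have h1 : HasDerivAt (fun t : ℝ => 2*t) (2:ℝ) y := by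
      simpa using (hasDerivAt_id y).const_mul (2:ℝ)
    have h2 : HasDerivAt (fun t : ℝ => Real.cosh t + 1) (Real.sinh y) y :=
      (Real.hasDerivAt_cosh y).add_const 1
    have h3 : HasDerivAt (fun t : ℝ => 2*t*(Real.cosh t + 1))
        (2*(Real.cosh y + 1) + 2*y*Real.sinh y) y := h1.mul h2
    have h4 : HasDerivAt (fun t : ℝ => t^2) (2*y) y := by simpa using hasDerivAt_pow 2 y
    have h5 : HasDerivAt (fun t : ℝ => t^2 * Real.sinh t)
        (2*y*Real.sinh y + y^2 * Real.cosh y) y := h4.mul (Real.hasDerivAt_sinh y)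
    have h6 := ((h3.add h5).const_mul (3*s/16)).sub (Real.hasDerivAt_exp y)
    have h7 := h6.add_const 1
    convert h7 using 1
    · rfl
    · rfl
    · rfl
    ring
  have hG : ∀ y ∈ interior (Set.Ici (0:ℝ)), 0 ≤ deriv F' y := by
    intro y hy
    rw [interior_Ici] at hy
    rw [(hder2 y).deriv]
    have := Gpos (le_of_lt hy)
    linarith
  have hmono' : MonotoneOn F' (Set.Ici 0) := by
    apply monotoneOn_of_deriv_nonneg (convex_Ici 0)
    · exact fun y _ => ((hder2 y).differentiableAt.continuousAt).continuousWithinAt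
    · exact fun y _ => (hder2 y).differentiableAt.differentiableWithinAt
    · exact hG
  have hF'0 : F' 0 = 0 := by simp [hF']
  have hF'nonneg : ∀ y ∈ interior (Set.Ici (0:ℝ)), 0 ≤ deriv F y := by
    intro y hy
    rw [interior_Ici] at hy
    rw [(hder1 y).deriv]
    have := hmono' (Set.self_mem_Ici) (Set.mem_Ici.mpr hy.le) hy.le
    rw [hF'0] at this
    exact this
  have hmono : MonotoneOn F (Set.Ici 0) := by
    apply monotoneOn_of_deriv_nonneg (convex_Ici 0)
    · exact fun y _ => ((hder1 y).differentiableAt.continuousAt).continuousWithinAt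
    · exact fun y _ => (hder1 y).differentiableAt.differentiableWithinAt
    · exact hF'nonneg
  have hF0 : F 0 = 0 := by simp [hF]
  have := hmono (Set.self_mem_Ici) (Set.mem_Ici.mpr hx) hx
  rw [hF0] at this
  simp only [hF] at this
  linarith

lemma Mbound {a b : ℝ} (ha : 0 ≤ a) (hb : 0 ≤ b) :
    Real.sinh b^2 * (Real.sinh a * Real.cosh a - a) + Real.sinh a^2 * (Real.sinh b * Real.cosh b - b)
      ≤ 3*Real.sqrt 3/4 * a^2 * Real.sinh (a+b)^2 := by
  have hs : Real.sqrt 3 ^ 2 = 3 := Real.sq_sqrt (by norm_num)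
  have hsn : 0 ≤ Real.sqrt 3 := Real.sqrt_nonneg 3
  -- step 1 : sinh b * cosh b - b ≤ sinh b ^ 2
  have h1 : Real.sinh b * Real.cosh b - b ≤ Real.sinh b ^ 2 := by
    have hexp : 1 + (-2*b) ≤ Real.exp (-2*b) := by
      have := Real.add_one_le_exp (-2*b); linarith
    have hprod : Real.exp b * Real.exp (-b) = 1 := by
      rw [← Real.exp_add]; simp
    have h2b : Real.exp (-2*b) = Real.exp (-b) * Real.exp (-b) := by
      rw [← Real.exp_add]; ring_nf
    rw [Real.sinh_eq, Real.cosh_eq]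
    nlinarith [hprod, h2b ▸ hexp]
  -- step 2 : sinh a * cosh a - a + sinh a ^ 2 = (exp (2a) - 1 - 2a)/2
  have h2 : Real.sinh a * Real.cosh a - a + Real.sinh a ^ 2 = (Real.exp (2*a) - 1 - 2*a)/2 := by
    have h2a : Real.exp (2*a) = Real.exp a * Real.exp a := by rw [← Real.exp_add]; ring_nf
    have hprod : Real.exp a * Real.exp (-a) = 1 := by rw [← Real.exp_add]; simp
    rw [Real.sinh_eq, Real.cosh_eq, h2a]
    nlinarith [hprod]
  -- step 3 : star at 2a
  have h3 : Real.exp (2*a) - 1 - 2*a ≤ 3*Real.sqrt 3/2 * a^2 * Real.cosh a ^ 2 := by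
    have := star (by linarith : (0:ℝ) ≤ 2*a)
    have hc2 : Real.cosh (2*a) = Real.cosh a ^ 2 + Real.sinh a ^ 2 := Real.cosh_two_mul a
    have hc3 : Real.cosh a ^ 2 = Real.sinh a ^2 + 1 := Real.cosh_sq a
    rw [hc2, hc3] at this
    rw [hc3]
    nlinarith [this]
  -- step 4 : sinh(a+b) ≥ cosh a * sinh b ≥ 0
  have h4 : Real.cosh a * Real.sinh b ≤ Real.sinh (a+b) := by
    rw [Real.sinh_add]
    nlinarith [Real.sinh_nonneg_iff.mpr ha, Real.cosh_pos b, (Real.cosh_pos b).le]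
  have h5 : (Real.cosh a * Real.sinh b)^2 ≤ Real.sinh (a+b)^2 := by
    have h6 : 0 ≤ Real.cosh a * Real.sinh b := mul_nonneg (Real.cosh_pos a).le (Real.sinh_nonneg_iff.mpr hb)
    nlinarith [h4, h6]
  -- combine
  have hsb2 : 0 ≤ Real.sinh b ^ 2 := sq_nonneg _
  have hcomb : Real.sinh b^2 * (Real.sinh a * Real.cosh a - a) + Real.sinh a^2 * (Real.sinh b * Real.cosh b - b)
      ≤ Real.sinh b^2 * ((Real.exp (2*a) - 1 - 2*a)/2) := by
    nlinarith [mul_le_mul_of_nonneg_left h1 (sq_nonneg (Real.sinh a)), h2, hsb2]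
  have hstep : Real.sinh b^2 * ((Real.exp (2*a) - 1 - 2*a)/2) ≤ Real.sinh b^2 * (3*Real.sqrt 3/4 * a^2 * Real.cosh a ^2) := by
    apply mul_le_mul_of_nonneg_left _ hsb2
    linarith
  have hfin : Real.sinh b^2 * (3*Real.sqrt 3/4 * a^2 * Real.cosh a ^2) ≤ 3*Real.sqrt 3/4 * a^2 * Real.sinh (a+b)^2 := by
    have hK : 0 ≤ 3*Real.sqrt 3/4 * a^2 := by positivity
    calc Real.sinh b^2 * (3*Real.sqrt 3/4 * a^2 * Real.cosh a ^2)
        = 3*Real.sqrt 3/4 * a^2 * (Real.cosh a * Real.sinh b)^2 := by ring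
      _ ≤ 3*Real.sqrt 3/4 * a^2 * Real.sinh (a+b)^2 := mul_le_mul_of_nonneg_left h5 hK
  linarith

lemma cs_interval {f g : ℝ → ℝ} {p q : ℝ} (hpq : p ≤ q) (hf : Continuous f) (hg : Continuous g) :
    |∫ s in p..q, f s * g s| ≤ Real.sqrt (∫ s in p..q, f s^2) * Real.sqrt (∫ s in p..q, g s^2) := by
  set A := ∫ s in p..q, f s^2 with hAdef
  set B := ∫ s in p..q, f s * g s with hBdef
  set C := ∫ s in p..q, g s^2 with hCdef
  have hA : 0 ≤ A := intervalIntegral.integral_nonneg hpq (fun s _ => sq_nonneg _)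
  have hC : 0 ≤ C := intervalIntegral.integral_nonneg hpq (fun s _ => sq_nonneg _)
  have hexp : ∀ t : ℝ, 0 ≤ t^2*A + 2*t*B + C := by
    intro t
    have h0 : (0:ℝ) ≤ ∫ s in p..q, (t * f s + g s)^2 :=
      intervalIntegral.integral_nonneg hpq (fun s _ => sq_nonneg _)
    have h1 : (∫ s in p..q, (t * f s + g s)^2)
        = t^2*A + 2*t*B + C := by
      have e1 : ∀ s, (t * f s + g s)^2 = t^2 * f s^2 + (2*t*(f s * g s) + g s^2) := by
        intro s; ring
      rw [intervalIntegral.integral_congr (g := fun s => t^2 * f s^2 + (2*t*(f s * g s) + g s^2))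
        (fun s _ => e1 s)]
      rw [intervalIntegral.integral_add, intervalIntegral.integral_add,
        intervalIntegral.integral_const_mul, intervalIntegral.integral_const_mul]
      · ring
      · exact (continuous_const.mul (hf.mul hg)).intervalIntegrable _ _
      · exact (hg.pow 2).intervalIntegrable _ _
      · exact (continuous_const.mul (hf.pow 2)).intervalIntegrable _ _
      · exact ((continuous_const.mul (hf.mul hg)).intervalIntegrable _ _).add ((hg.pow 2).intervalIntegrable _ _)
    linarith [h1 ▸ h0]
  have key : B^2 ≤ A * C := by
    rcases eq_or_lt_of_le hA with hA0 | hA0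
    · -- A = 0 ⇒ B = 0
      have hB0 : B = 0 := by
        by_contra hB
        have ht := hexp ((-(C+1))/(2*B))
        rw [← hA0] at ht
        have he : 2 * ((-(C+1))/(2*B)) * B = -(C+1) := by field_simp
        rw [he] at ht
        simp only [zero_mul, mul_zero] at ht
        nlinarith [ht, hC]
      rw [hB0]
      simpa using mul_nonneg hA hC
    · have hAne : A ≠ 0 := ne_of_gt hA0
      have e : (-B/A)^2*A + 2*(-B/A)*B + C = C - B^2/A := by
        field_simp
        ring
      have ht := hexp (-B/A)
      rw [e] at ht
      have h4 : B^2/A ≤ C := by linarith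
      have h5 : B^2 ≤ C * A := by
        rw [← div_mul_cancel₀ (B^2) hAne]
        exact mul_le_mul_of_nonneg_right h4 hA
      nlinarith [h5]
  calc |B| = Real.sqrt (B^2) := (Real.sqrt_sq_eq_abs B).symm
    _ ≤ Real.sqrt (A*C) := Real.sqrt_le_sqrt key
    _ = Real.sqrt A * Real.sqrt C := Real.sqrt_mul hA C

lemma l2pair {α β c d : ℝ} (hα : 0 ≤ α) (hβ : 0 ≤ β) (hc : 0 ≤ c) (hd : 0 ≤ d) :
    α*c + β*d ≤ Real.sqrt (α^2+β^2) * Real.sqrt (c^2+d^2) := by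
  have h1 : (α*c+β*d)^2 ≤ (α^2+β^2)*(c^2+d^2) := by nlinarith [sq_nonneg (α*d - β*c)]
  have h2 : 0 ≤ α*c+β*d := by positivity
  calc α*c+β*d = Real.sqrt ((α*c+β*d)^2) := (Real.sqrt_sq h2).symm
    _ ≤ Real.sqrt ((α^2+β^2)*(c^2+d^2)) := Real.sqrt_le_sqrt h1
    _ = Real.sqrt (α^2+β^2) * Real.sqrt (c^2+d^2) := Real.sqrt_mul (by positivity) _

lemma wbound (k : ℝ) (hk : 0 < k) (w ζ : ℝ → ℝ) (hw : ContDiff ℝ 2 w) (hζ : Continuous ζ)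
    (hw0 : w 0 = 0) (hw1 : w 1 = 0)
    (hrel : ∀ z ∈ Set.Icc (0:ℝ) 1, iteratedDeriv 2 w z - k^2 * w z = k * ζ z)
    {z : ℝ} (hz0 : 0 ≤ z) (hz1 : z ≤ 1) :
    |w z| ≤ Real.sqrt (3*Real.sqrt 3/8) * Real.sqrt k * z * Real.sqrt (∫ s in (0:ℝ)..1, ζ s^2) := by
  have hw2 : ContDiff ℝ ((1:WithTop ℕ∞)+1) w := by exact_mod_cast hw
  have hwdiff : Differentiable ℝ w := (contDiff_succ_iff_deriv.mp hw2).1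
  have hwd1 : ContDiff ℝ (1:WithTop ℕ∞) (deriv w) := (contDiff_succ_iff_deriv.mp hw2).2.2
  have hwddiff : Differentiable ℝ (deriv w) := contDiff_one_iff_deriv.mp hwd1 |>.1
  have hitd : ∀ y, iteratedDeriv 2 w y = deriv (deriv w) y := by
    intro y
    rw [show (2:ℕ) = 1+1 from rfl, iteratedDeriv_succ, iteratedDeriv_one]
  -- E1
  have hE1 : (∫ s in (0:ℝ)..z, Real.sinh (k*s) * (k * ζ s))
      = Real.sinh (k*z) * deriv w z - k * Real.cosh (k*z) * w z := by
    have hft : ∀ s ∈ Set.uIcc (0:ℝ) z, HasDerivAt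
        (fun t => Real.sinh (k*t) * deriv w t - k * Real.cosh (k*t) * w t)
        (Real.sinh (k*s) * (k * ζ s)) s := by
      intro s hs
      have hsIcc : s ∈ Set.Icc (0:ℝ) 1 := by
        rw [Set.uIcc_of_le hz0] at hs
        exact ⟨hs.1, le_trans hs.2 hz1⟩
      have hks : HasDerivAt (fun t : ℝ => k*t) k s := by
        simpa using (hasDerivAt_id s).const_mul k
      have h1 : HasDerivAt (fun t : ℝ => Real.sinh (k*t)) (Real.cosh (k*s) * k) s :=
        (Real.hasDerivAt_sinh (k*s)).comp s hks
      have h2 : HasDerivAt (fun t : ℝ => Real.cosh (k*t)) (Real.sinh (k*s) * k) s :=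
        (Real.hasDerivAt_cosh (k*s)).comp s hks
      have h3 : HasDerivAt w (deriv w s) s := hwdiff.differentiableAt.hasDerivAt
      have h4 : HasDerivAt (deriv w) (deriv (deriv w) s) s := hwddiff.differentiableAt.hasDerivAt
      have h5 := (h1.mul h4).sub ((h2.const_mul k).mul h3)
      have hrw := hrel s hsIcc
      rw [hitd s] at hrw
      convert h5 using 1
      · rfl
      · rfl
      · rfl
      linear_combination (-(Real.sinh (k*s))) * hrw
    rw [intervalIntegral.integral_eq_sub_of_hasDerivAt hft
      (((Real.continuous_sinh.comp (continuous_const.mul continuous_id)).mul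
        (continuous_const.mul hζ)).intervalIntegrable _ _)]
    simp [hw0]
  -- E2
  have hE2 : (∫ s in z..(1:ℝ), Real.sinh (k*(1-s)) * (k * ζ s))
      = -(Real.sinh (k*(1-z)) * deriv w z) - k * Real.cosh (k*(1-z)) * w z := by
    have hft : ∀ s ∈ Set.uIcc z (1:ℝ), HasDerivAt
        (fun t => Real.sinh (k*(1-t)) * deriv w t + k * Real.cosh (k*(1-t)) * w t)
        (Real.sinh (k*(1-s)) * (k * ζ s)) s := by
      intro s hs
      have hsIcc : s ∈ Set.Icc (0:ℝ) 1 := by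
        rw [Set.uIcc_of_le hz1] at hs
        exact ⟨le_trans hz0 hs.1, hs.2⟩
      have hks : HasDerivAt (fun t : ℝ => k*(1-t)) (-k) s := by
        have := ((hasDerivAt_id s).const_sub 1).const_mul k
        simpa using this
      have h1 : HasDerivAt (fun t : ℝ => Real.sinh (k*(1-t))) (Real.cosh (k*(1-s)) * (-k)) s :=
        ((Real.hasDerivAt_sinh (k*(1-s))).comp s hks :)
      have h2 : HasDerivAt (fun t : ℝ => Real.cosh (k*(1-t))) (Real.sinh (k*(1-s)) * (-k)) s :=
        ((Real.hasDerivAt_cosh (k*(1-s))).comp s hks :)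
      have h3 : HasDerivAt w (deriv w s) s := hwdiff.differentiableAt.hasDerivAt
      have h4 : HasDerivAt (deriv w) (deriv (deriv w) s) s := hwddiff.differentiableAt.hasDerivAt
      have h5 := (h1.mul h4).add ((h2.const_mul k).mul h3)
      have hrw := hrel s hsIcc
      rw [hitd s] at hrw
      convert h5 using 1
      · rfl
      · rfl
      · rfl
      linear_combination (-(Real.sinh (k*(1-s)))) * hrw
    rw [intervalIntegral.integral_eq_sub_of_hasDerivAt hft
      (((Real.continuous_sinh.comp (continuous_const.mul (continuous_const.sub continuous_id))).mul
        (continuous_const.mul hζ)).intervalIntegrable _ _)]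
    simp [hw1]
    ring
  -- representation
  have hsinhk : 0 < Real.sinh k := Real.sinh_pos_iff.mpr hk
  have hrep : Real.sinh k * w z
      = -(Real.sinh (k*(1-z)) * (∫ s in (0:ℝ)..z, Real.sinh (k*s) * ζ s)
          + Real.sinh (k*z) * (∫ s in z..(1:ℝ), Real.sinh (k*(1-s)) * ζ s)) := by
    have e1 : (∫ s in (0:ℝ)..z, Real.sinh (k*s) * (k * ζ s))
        = k * ∫ s in (0:ℝ)..z, Real.sinh (k*s) * ζ s := by
      rw [← intervalIntegral.integral_const_mul]
      apply intervalIntegral.integral_congr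
      intro s _; ring
    have e2 : (∫ s in z..(1:ℝ), Real.sinh (k*(1-s)) * (k * ζ s))
        = k * ∫ s in z..(1:ℝ), Real.sinh (k*(1-s)) * ζ s := by
      rw [← intervalIntegral.integral_const_mul]
      apply intervalIntegral.integral_congr
      intro s _; ring
    rw [e1] at hE1
    rw [e2] at hE2
    have hadd : Real.sinh (k*(1-z)) * Real.cosh (k*z) + Real.cosh (k*(1-z)) * Real.sinh (k*z)
        = Real.sinh k := by
      rw [← Real.sinh_add]
      ring_nf
    have hcomb : Real.sinh (k*(1-z)) * (k * ∫ s in (0:ℝ)..z, Real.sinh (k*s) * ζ s)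
        + Real.sinh (k*z) * (k * ∫ s in z..(1:ℝ), Real.sinh (k*(1-s)) * ζ s)
        = - k * (Real.sinh k * w z) := by
      rw [hE1, hE2, ← hadd]
      ring
    refine mul_left_cancel₀ (ne_of_gt hk) ?_
    linear_combination hcomb
  -- Cauchy-Schwarz on both pieces
  have hcs1 : |∫ s in (0:ℝ)..z, Real.sinh (k*s) * ζ s|
      ≤ Real.sqrt (∫ s in (0:ℝ)..z, Real.sinh (k*s)^2) * Real.sqrt (∫ s in (0:ℝ)..z, ζ s^2) :=
    cs_interval hz0 (Real.continuous_sinh.comp (continuous_const.mul continuous_id)) hζ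
  have hcs2 : |∫ s in z..(1:ℝ), Real.sinh (k*(1-s)) * ζ s|
      ≤ Real.sqrt (∫ s in z..(1:ℝ), Real.sinh (k*(1-s))^2) * Real.sqrt (∫ s in z..(1:ℝ), ζ s^2) :=
    cs_interval hz1 (Real.continuous_sinh.comp (continuous_const.mul (continuous_const.sub continuous_id))) hζ
  -- integral of sinh^2 on [0,z]
  have hQ1 : (∫ s in (0:ℝ)..z, Real.sinh (k*s)^2)
      = (Real.sinh (k*z) * Real.cosh (k*z) - k*z)/(2*k) := by
    have hft : ∀ s ∈ Set.uIcc (0:ℝ) z, HasDerivAt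
        (fun t => (Real.sinh (k*t) * Real.cosh (k*t) - k*t)/(2*k)) (Real.sinh (k*s)^2) s := by
      intro s _
      have hks : HasDerivAt (fun t : ℝ => k*t) k s := by
        simpa using (hasDerivAt_id s).const_mul k
      have h1 : HasDerivAt (fun t : ℝ => Real.sinh (k*t)) (Real.cosh (k*s) * k) s :=
        (Real.hasDerivAt_sinh (k*s)).comp s hks
      have h2 : HasDerivAt (fun t : ℝ => Real.cosh (k*t)) (Real.sinh (k*s) * k) s :=
        (Real.hasDerivAt_cosh (k*s)).comp s hks
      have h5 := ((h1.mul h2).sub hks).div_const (2*k)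
      convert h5 using 1
      · rfl
      · rfl
      · rfl
      have hc := Real.cosh_sq (k*s)
      field_simp
      linear_combination (-1 : ℝ) * hc
    rw [intervalIntegral.integral_eq_sub_of_hasDerivAt hft
      (((Real.continuous_sinh.comp (continuous_const.mul continuous_id)).pow 2).intervalIntegrable _ _)]
    simp
  -- integral of sinh^2 on [z,1]
  have hQ2 : (∫ s in z..(1:ℝ), Real.sinh (k*(1-s))^2)
      = (Real.sinh (k*(1-z)) * Real.cosh (k*(1-z)) - k*(1-z))/(2*k) := by
    have hft : ∀ s ∈ Set.uIcc z (1:ℝ), HasDerivAt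
        (fun t => -((Real.sinh (k*(1-t)) * Real.cosh (k*(1-t)) - k*(1-t))/(2*k)))
        (Real.sinh (k*(1-s))^2) s := by
      intro s _
      have hks : HasDerivAt (fun t : ℝ => k*(1-t)) (-k) s := by
        have := ((hasDerivAt_id s).const_sub 1).const_mul k
        simpa using this
      have h1 : HasDerivAt (fun t : ℝ => Real.sinh (k*(1-t))) (Real.cosh (k*(1-s)) * (-k)) s :=
        ((Real.hasDerivAt_sinh (k*(1-s))).comp s hks :)
      have h2 : HasDerivAt (fun t : ℝ => Real.cosh (k*(1-t))) (Real.sinh (k*(1-s)) * (-k)) s :=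
        ((Real.hasDerivAt_cosh (k*(1-s))).comp s hks :)
      have h5 := (((h1.mul h2).sub hks).div_const (2*k)).neg
      convert h5 using 1
      · rfl
      · rfl
      · rfl
      have hc := Real.cosh_sq (k*(1-s))
      field_simp
      linear_combination (-1 : ℝ) * hc
    rw [intervalIntegral.integral_eq_sub_of_hasDerivAt hft
      (((Real.continuous_sinh.comp (continuous_const.mul (continuous_const.sub continuous_id))).pow 2).intervalIntegrable _ _)]
    simp
  -- notation
  set Sa := Real.sinh (k*z) with hSa
  set Sb := Real.sinh (k*(1-z)) with hSb
  have hSa0 : 0 ≤ Sa := Real.sinh_nonneg_iff.mpr (by positivity)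
  have hSb0 : 0 ≤ Sb := Real.sinh_nonneg_iff.mpr (by nlinarith)
  set Q1 := ∫ s in (0:ℝ)..z, Real.sinh (k*s)^2 with hQ1d
  set Q2 := ∫ s in z..(1:ℝ), Real.sinh (k*(1-s))^2 with hQ2d
  set C1 := ∫ s in (0:ℝ)..z, ζ s^2 with hC1d
  set C2 := ∫ s in z..(1:ℝ), ζ s^2 with hC2d
  have hQ1n : 0 ≤ Q1 := intervalIntegral.integral_nonneg hz0 (fun s _ => sq_nonneg _)
  have hQ2n : 0 ≤ Q2 := intervalIntegral.integral_nonneg hz1 (fun s _ => sq_nonneg _)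
  have hC1n : 0 ≤ C1 := intervalIntegral.integral_nonneg hz0 (fun s _ => sq_nonneg _)
  have hC2n : 0 ≤ C2 := intervalIntegral.integral_nonneg hz1 (fun s _ => sq_nonneg _)
  have hCsum : C1 + C2 = ∫ s in (0:ℝ)..1, ζ s^2 :=
    intervalIntegral.integral_add_adjacent_intervals
      ((hζ.pow 2).intervalIntegrable _ _) ((hζ.pow 2).intervalIntegrable _ _)
  -- combine the two CS estimates via the two-vector Cauchy-Schwarz
  have habs : |w z| * Real.sinh k ≤ (Sb * Real.sqrt Q1) * Real.sqrt C1 + (Sa * Real.sqrt Q2) * Real.sqrt C2 := by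
    have h1 : |w z| * Real.sinh k = |Real.sinh k * w z| := by
      rw [abs_mul, abs_of_pos hsinhk]; ring
    rw [h1, hrep]
    calc |(-(Sb * (∫ s in (0:ℝ)..z, Real.sinh (k*s) * ζ s)
          + Sa * (∫ s in z..(1:ℝ), Real.sinh (k*(1-s)) * ζ s)))|
        ≤ Sb * |∫ s in (0:ℝ)..z, Real.sinh (k*s) * ζ s|
          + Sa * |∫ s in z..(1:ℝ), Real.sinh (k*(1-s)) * ζ s| := by
          rw [abs_neg]
          refine le_trans (abs_add_le _ _) ?_
          rw [abs_mul, abs_mul, abs_of_nonneg hSb0, abs_of_nonneg hSa0]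
      _ ≤ Sb * (Real.sqrt Q1 * Real.sqrt C1) + Sa * (Real.sqrt Q2 * Real.sqrt C2) := by
          gcongr
      _ = (Sb * Real.sqrt Q1) * Real.sqrt C1 + (Sa * Real.sqrt Q2) * Real.sqrt C2 := by ring
  have hpair : (Sb * Real.sqrt Q1) * Real.sqrt C1 + (Sa * Real.sqrt Q2) * Real.sqrt C2
      ≤ Real.sqrt (Sb^2 * Q1 + Sa^2 * Q2) * Real.sqrt (C1 + C2) := by
    have h := l2pair (mul_nonneg hSb0 (Real.sqrt_nonneg Q1)) (mul_nonneg hSa0 (Real.sqrt_nonneg Q2))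
      (Real.sqrt_nonneg C1) (Real.sqrt_nonneg C2)
    have e1 : (Sb * Real.sqrt Q1)^2 + (Sa * Real.sqrt Q2)^2 = Sb^2 * Q1 + Sa^2 * Q2 := by
      rw [mul_pow, mul_pow, Real.sq_sqrt hQ1n, Real.sq_sqrt hQ2n]
    have e2 : (Real.sqrt C1)^2 + (Real.sqrt C2)^2 = C1 + C2 := by
      rw [Real.sq_sqrt hC1n, Real.sq_sqrt hC2n]
    rw [e1, e2] at h
    exact h
  -- the kernel L² bound via Mbound
  have hker : Sb^2 * Q1 + Sa^2 * Q2 ≤ 3*Real.sqrt 3/8 * k * z^2 * Real.sinh k^2 := by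
    have hM := Mbound (a := k*z) (b := k*(1-z)) (by positivity) (by nlinarith)
    rw [show k*z + k*(1-z) = k by ring] at hM
    rw [hQ1, hQ2]
    have h2k : (0:ℝ) < 2*k := by linarith
    have step : Sb^2 * ((Sa * Real.cosh (k*z) - k*z)/(2*k)) + Sa^2 * ((Sb * Real.cosh (k*(1-z)) - k*(1-z))/(2*k))
        = (Sb^2 * (Sa * Real.cosh (k*z) - k*z) + Sa^2 * (Sb * Real.cosh (k*(1-z)) - k*(1-z)))/(2*k) := by
      ring
    rw [step, show 3*Real.sqrt 3/8 * k * z^2 * Real.sinh k^2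
        = (3*Real.sqrt 3/4 * (k*z)^2 * Real.sinh k^2)/(2*k) by field_simp; ring]
    exact (div_le_div_iff_of_pos_right h2k).mpr hM
  -- final assembly
  have hsqrtker : Real.sqrt (Sb^2 * Q1 + Sa^2 * Q2)
      ≤ Real.sqrt (3*Real.sqrt 3/8) * Real.sqrt k * z * Real.sinh k := by
    have e : 3*Real.sqrt 3/8 * k * z^2 * Real.sinh k^2
        = (Real.sqrt (3*Real.sqrt 3/8) * Real.sqrt k * z * Real.sinh k)^2 := by
      rw [mul_pow, mul_pow, mul_pow, Real.sq_sqrt (by positivity : (0:ℝ) ≤ 3*Real.sqrt 3/8),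
        Real.sq_sqrt hk.le]
    calc Real.sqrt (Sb^2 * Q1 + Sa^2 * Q2) ≤ Real.sqrt (3*Real.sqrt 3/8 * k * z^2 * Real.sinh k^2) :=
          Real.sqrt_le_sqrt hker
      _ = Real.sqrt (3*Real.sqrt 3/8) * Real.sqrt k * z * Real.sinh k := by
          rw [e, Real.sqrt_sq (by positivity)]
  have hZ : Real.sqrt (C1 + C2) = Real.sqrt (∫ s in (0:ℝ)..1, ζ s^2) := by rw [hCsum]
  have hfin : |w z| * Real.sinh k
      ≤ (Real.sqrt (3*Real.sqrt 3/8) * Real.sqrt k * z * Real.sqrt (∫ s in (0:ℝ)..1, ζ s^2)) * Real.sinh k := by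
    calc |w z| * Real.sinh k
        ≤ (Sb * Real.sqrt Q1) * Real.sqrt C1 + (Sa * Real.sqrt Q2) * Real.sqrt C2 := habs
      _ ≤ Real.sqrt (Sb^2 * Q1 + Sa^2 * Q2) * Real.sqrt (C1 + C2) := hpair
      _ ≤ (Real.sqrt (3*Real.sqrt 3/8) * Real.sqrt k * z * Real.sinh k) * Real.sqrt (C1 + C2) := by
          exact mul_le_mul_of_nonneg_right hsqrtker (Real.sqrt_nonneg _)
      _ = (Real.sqrt (3*Real.sqrt 3/8) * Real.sqrt k * z * Real.sqrt (∫ s in (0:ℝ)..1, ζ s^2)) * Real.sinh k := by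
          rw [hZ]; ring
  exact le_of_mul_le_mul_right hfin hsinhk

lemma Tbound (T : ℝ → ℝ) (hT : ContDiff ℝ 1 T) (hT0 : T 0 = 0)
    {z : ℝ} (hz0 : 0 ≤ z) (hz1 : z ≤ 1) :
    |T z| ≤ Real.sqrt z * Real.sqrt (∫ s in (0:ℝ)..1, (deriv T s)^2) := by
  have hTdiff : Differentiable ℝ T := hT.differentiable one_ne_zero
  have hT'c : Continuous (deriv T) := hT.continuous_deriv le_rfl
  have hrepr : T z = ∫ s in (0:ℝ)..z, 1 * deriv T s := by
    have : (∫ s in (0:ℝ)..z, deriv T s) = T z - T 0 :=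
      intervalIntegral.integral_deriv_eq_sub (fun s _ => hTdiff.differentiableAt)
        (hT'c.intervalIntegrable _ _)
    rw [hT0] at this
    rw [intervalIntegral.integral_congr (g := fun s => deriv T s) (fun s _ => one_mul _)]
    linarith
  have hcs := cs_interval (f := fun _ => (1:ℝ)) (g := deriv T) hz0 continuous_const hT'c
  have h1 : (∫ s in (0:ℝ)..z, (1:ℝ)^2) = z := by simp
  rw [h1] at hcs
  have hmono : (∫ s in (0:ℝ)..z, (deriv T s)^2) ≤ ∫ s in (0:ℝ)..1, (deriv T s)^2 := by
    apply intervalIntegral.integral_mono_interval le_rfl hz0 hz1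
    · exact MeasureTheory.ae_of_all _ (fun s => sq_nonneg _)
    · exact ((hT'c.pow 2).intervalIntegrable _ _)
  calc |T z| = |∫ s in (0:ℝ)..z, 1 * deriv T s| := by rw [← hrepr]
    _ ≤ Real.sqrt z * Real.sqrt (∫ s in (0:ℝ)..z, (deriv T s)^2) := hcs
    _ ≤ Real.sqrt z * Real.sqrt (∫ s in (0:ℝ)..1, (deriv T s)^2) :=
        mul_le_mul_of_nonneg_left (Real.sqrt_le_sqrt hmono) (Real.sqrt_nonneg z)

/-- Lower boundary-layer estimate in the stress-free proof: for `δ ∈ (0,1]`, with the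
pseudo-vorticity relation `w'' - k²w = kζ`, `w(0) = w(1) = ζ(0) = ζ(1) = 0` and `T(0) = 0`,
`∫₀^δ |w T| ≤ (2c₁/5) k^{1/2} δ^{5/2} ‖ζ‖₂ ‖T'‖₂` with `c₁ = 3^{3/4}/2^{3/2}`. -/
theorem lower_boundary_layer_estimate_stress_free
    (k δ : ℝ) (hk : 0 < k) (hδ : δ ∈ Set.Ioc (0:ℝ) 1)
    (w ζ T : ℝ → ℝ) (hw : ContDiff ℝ 2 w) (hζ : Continuous ζ) (hT : ContDiff ℝ 1 T)
    (hw0 : w 0 = 0) (hw1 : w 1 = 0) (hζ0 : ζ 0 = 0) (hζ1 : ζ 1 = 0)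
    (hrel : ∀ z ∈ Set.Icc (0:ℝ) 1, iteratedDeriv 2 w z - k^2 * w z = k * ζ z)
    (hT0 : T 0 = 0) :
    (∫ z in (0:ℝ)..δ, |w z * T z|) ≤
      (2 * (3 ^ ((3:ℝ)/4) / 2 ^ ((3:ℝ)/2)) / 5) * k ^ ((1:ℝ)/2) * δ ^ ((5:ℝ)/2) *
        (∫ z in (0:ℝ)..1, (ζ z)^2) ^ ((1:ℝ)/2) *
        (∫ z in (0:ℝ)..1, (deriv T z)^2) ^ ((1:ℝ)/2) := by
  obtain ⟨hδ0, hδ1⟩ := hδ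
  set Zζ := ∫ z in (0:ℝ)..1, (ζ z)^2 with hZζ
  set ZT := ∫ z in (0:ℝ)..1, (deriv T z)^2 with hZT
  have hZζn : 0 ≤ Zζ := intervalIntegral.integral_nonneg (by norm_num) (fun s _ => sq_nonneg _)
  have hZTn : 0 ≤ ZT := intervalIntegral.integral_nonneg (by norm_num) (fun s _ => sq_nonneg _)
  set c₁ : ℝ := Real.sqrt (3*Real.sqrt 3/8) with hc₁
  set Kc : ℝ := c₁ * Real.sqrt k * Real.sqrt Zζ * Real.sqrt ZT with hKc
  have hKcn : 0 ≤ Kc := by positivity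
  -- pointwise bound
  have hpt : ∀ z ∈ Set.Icc (0:ℝ) δ, |w z * T z| ≤ Kc * (z * Real.sqrt z) := by
    intro z hz
    have hz0 : 0 ≤ z := hz.1
    have hz1 : z ≤ 1 := le_trans hz.2 hδ1
    have h1 := wbound k hk w ζ hw hζ hw0 hw1 hrel hz0 hz1
    have h2 := Tbound T hT hT0 hz0 hz1
    calc |w z * T z| = |w z| * |T z| := abs_mul _ _
      _ ≤ (c₁ * Real.sqrt k * z * Real.sqrt Zζ) * (Real.sqrt z * Real.sqrt ZT) := by
          apply mul_le_mul h1 h2 (abs_nonneg _) (by positivity)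
      _ = Kc * (z * Real.sqrt z) := by rw [hKc]; ring
  -- integrate
  have hint : (∫ z in (0:ℝ)..δ, |w z * T z|) ≤ ∫ z in (0:ℝ)..δ, Kc * (z * Real.sqrt z) := by
    apply intervalIntegral.integral_mono_on hδ0.le ?_ ?_ hpt
    · exact ((hw.continuous.mul hT.continuous).abs).intervalIntegrable _ _
    · exact (continuous_const.mul (continuous_id.mul Real.continuous_sqrt)).intervalIntegrable _ _
  have hrpow : (∫ z in (0:ℝ)..δ, Kc * (z * Real.sqrt z)) = Kc * (2/5 * δ ^ ((5:ℝ)/2)) := by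
    rw [intervalIntegral.integral_const_mul]
    congr 1
    have hcg : ∀ z ∈ Set.uIcc (0:ℝ) δ, z * Real.sqrt z = z ^ ((3:ℝ)/2) := by
      intro z hz
      rw [Set.uIcc_of_le hδ0.le] at hz
      rw [show ((3:ℝ)/2) = 1 + 1/2 by norm_num, Real.rpow_add' hz.1 (by norm_num),
        Real.rpow_one, ← Real.sqrt_eq_rpow]
    rw [intervalIntegral.integral_congr hcg, integral_rpow (Or.inl (by norm_num))]
    rw [Real.zero_rpow (by norm_num)]
    rw [show (3:ℝ)/2 + 1 = 5/2 by norm_num]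
    ring
  -- constants
  have hc₁eq : c₁ = 3 ^ ((3:ℝ)/4) / 2 ^ ((3:ℝ)/2) := by
    have a1 : ((3:ℝ) ^ ((3:ℝ)/4))^2 = (3:ℝ) ^ ((3:ℝ)/2) := by
      rw [← Real.rpow_natCast ((3:ℝ) ^ ((3:ℝ)/4)) 2, ← Real.rpow_mul (by norm_num : (0:ℝ) ≤ 3)]
      norm_num
    have a2 : ((2:ℝ) ^ ((3:ℝ)/2))^2 = 8 := by
      rw [← Real.rpow_natCast ((2:ℝ) ^ ((3:ℝ)/2)) 2, ← Real.rpow_mul (by norm_num : (0:ℝ) ≤ 2)]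
      rw [show ((3:ℝ)/2) * ((2:ℕ):ℝ) = ((3:ℕ):ℝ) by norm_num, Real.rpow_natCast]
      norm_num
    have a3 : (3:ℝ) ^ ((3:ℝ)/2) = 3 * Real.sqrt 3 := by
      rw [show ((3:ℝ)/2) = 1 + 1/2 by norm_num, Real.rpow_add' (by norm_num) (by norm_num),
        Real.rpow_one, Real.sqrt_eq_rpow]
    have hsq : (3 ^ ((3:ℝ)/4) / 2 ^ ((3:ℝ)/2))^2 = 3*Real.sqrt 3/8 := by
      rw [div_pow, a1, a2, a3]
    rw [hc₁, ← hsq, Real.sqrt_sq (by positivity)]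
  calc (∫ z in (0:ℝ)..δ, |w z * T z|) ≤ Kc * (2/5 * δ ^ ((5:ℝ)/2)) := hrpow ▸ hint
    _ = (2 * (3 ^ ((3:ℝ)/4) / 2 ^ ((3:ℝ)/2)) / 5) * k ^ ((1:ℝ)/2) * δ ^ ((5:ℝ)/2) *
        Zζ ^ ((1:ℝ)/2) * ZT ^ ((1:ℝ)/2) := by
      rw [hKc, hc₁eq, Real.sqrt_eq_rpow k, Real.sqrt_eq_rpow Zζ, Real.sqrt_eq_rpow ZT]
      ring
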